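/- Let $\widetilde{W}_1, \widetilde{W}_2 : \mathbb{R} \to \mathbb{R}^{c\times c}$ be diagonal matrix solutions of $\widetilde{W}_1' = -\widetilde{W}_1 \widetilde{W}_2 \widetilde{W}_2^T + P \widetilde{W}_2^T$ and $\widetilde{W}_2' = -\widetilde{W}_1^T \widetilde{W}_1 \widetilde{W}_2 + \widetilde{W}_1^T P$ with $P$ diagonal and $\widetilde{W}_1(0) = \widetilde{W}_2(0) = A$ diagonal. Then $\widetilde{W}_1(t) = \widetilde{W}_2(t)$ for all $t$, and each diagonal entry $\alpha_i$ satisfies the decoupled scalar ODE $\alpha_i' = -\alpha_i^3 + \rho_i \alpha_i$ where $\rho_i$ is the $i$-th diagonal entry of $P$. -/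

import Mathlib

open Matrix

lemma diag_mul_diag {c : ℕ} {M N : Matrix (Fin c) (Fin c) ℝ} (hM : M.IsDiag)
    (hN : N.IsDiag) : (M * N).IsDiag := by
  intro i j hij
  rw [Matrix.mul_apply]
  refine Finset.sum_eq_zero fun k _ => ?_
  by_cases h : i = k
  · subst h; rw [hN hij, mul_zero]
  · rw [hM h, zero_mul]

lemma diag_mul_apply {c : ℕ} {M N : Matrix (Fin c) (Fin c) ℝ} (hM : M.IsDiag)
    (i : Fin c) : (M * N) i i = M i i * N i i := by
  rw [Matrix.mul_apply]
  exact Finset.sum_eq_single i (fun k _ hk => by rw [hM (Ne.symm hk), zero_mul])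
    (fun h => absurd (Finset.mem_univ i) h)

theorem stmt18 (c : ℕ)
    (W1 W2 : ℝ → Matrix (Fin c) (Fin c) ℝ)
    (P A : Matrix (Fin c) (Fin c) ℝ)
    (hP : P.IsDiag) (hA : A.IsDiag)
    (hdiag1 : ∀ t, (W1 t).IsDiag) (hdiag2 : ∀ t, (W2 t).IsDiag)
    (h1 : ∀ i j t, HasDerivAt (fun t => W1 t i j)
      ((-(W1 t * W2 t * (W2 t)ᵀ) + P * (W2 t)ᵀ) i j) t)
    (h2 : ∀ i j t, HasDerivAt (fun t => W2 t i j)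
      ((-((W1 t)ᵀ * W1 t * W2 t) + (W1 t)ᵀ * P) i j) t)
    (hinit1 : W1 0 = A) (hinit2 : W2 0 = A) :
    (∀ t, W1 t = W2 t) ∧
    ∀ i t, HasDerivAt (fun t => W1 t i i)
      (-(W1 t i i) ^ 3 + P i i * W1 t i i) t := by
  -- scalar derivative forms
  have ha : ∀ i t, HasDerivAt (fun t => W1 t i i)
      (-(W1 t i i * W2 t i i * W2 t i i) + P i i * W2 t i i) t := by
    intro i t
    have := h1 i i t
    have e : (-(W1 t * W2 t * (W2 t)ᵀ) + P * (W2 t)ᵀ) i i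
        = -(W1 t i i * W2 t i i * W2 t i i) + P i i * W2 t i i := by
      simp only [Matrix.add_apply, Matrix.neg_apply]
      rw [diag_mul_apply (diag_mul_diag (hdiag1 t) (hdiag2 t)), diag_mul_apply (hdiag1 t),
        diag_mul_apply hP, Matrix.transpose_apply]
    rwa [e] at this
  have hb : ∀ i t, HasDerivAt (fun t => W2 t i i)
      (-(W1 t i i * W1 t i i * W2 t i i) + W1 t i i * P i i) t := by
    intro i t
    have := h2 i i t
    have e : (-((W1 t)ᵀ * W1 t * W2 t) + (W1 t)ᵀ * P) i i
        = -(W1 t i i * W1 t i i * W2 t i i) + W1 t i i * P i i := by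
      simp only [Matrix.add_apply, Matrix.neg_apply]
      rw [diag_mul_apply (diag_mul_diag (hdiag1 t).transpose (hdiag1 t)),
        diag_mul_apply (hdiag1 t).transpose, diag_mul_apply (hdiag1 t).transpose,
        Matrix.transpose_apply]
    rwa [e] at this
  -- diagonal entries agree
  have key : ∀ i t, W1 t i i = W2 t i i := by
    intro i t
    set a : ℝ → ℝ := fun t => W1 t i i with ha'
    set b : ℝ → ℝ := fun t => W2 t i i with hb'
    have hca : Continuous a := by
      rw [continuous_iff_continuousAt]; exact fun t => (ha i t).continuousAt
    have hcb : Continuous b := by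
      rw [continuous_iff_continuousAt]; exact fun t => (hb i t).continuousAt
    set g : ℝ → ℝ := fun t => a t * b t - P i i with hg'
    have hcg : Continuous g := (hca.mul hcb).sub continuous_const
    set G : ℝ → ℝ := fun t => ∫ s in (0:ℝ)..t, g s with hG'
    have hGd : ∀ t, HasDerivAt G (g t) t := fun t =>
      intervalIntegral.integral_hasDerivAt_right (hcg.intervalIntegrable 0 t)
        (hcg.stronglyMeasurable.stronglyMeasurableAtFilter) hcg.continuousAt
    set u : ℝ → ℝ := fun t => a t - b t with hu'
    have hud : ∀ t, HasDerivAt u (g t * u t) t := by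
      intro t
      have := (ha i t).sub (hb i t)
      refine HasDerivAt.congr_deriv this ?_
      simp only [hg', hu', ha', hb']
      ring
    set φ : ℝ → ℝ := fun t => u t * Real.exp (-G t) with hφ'
    have hφd : ∀ t, HasDerivAt φ 0 t := by
      intro t
      have hE : HasDerivAt (fun t => Real.exp (-G t)) (-(g t) * Real.exp (-G t)) t := by
        have := (Real.hasDerivAt_exp (-G t)).comp t ((hGd t).neg)
        refine HasDerivAt.congr_deriv this ?_; ring
      have := (hud t).mul hE
      refine HasDerivAt.congr_deriv this ?_
      ring
    have hconst : ∀ t, φ t = φ 0 := by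
      intro t
      exact is_const_of_deriv_eq_zero (fun x => (hφd x).differentiableAt)
        (fun x => (hφd x).deriv) t 0
    have hφ0 : φ 0 = 0 := by
      simp only [hφ', hu', ha', hb', hinit1, hinit2, sub_self, zero_mul]
    have : u t * Real.exp (-G t) = 0 := by rw [← hφ0]; exact hconst t
    have hu0 : u t = 0 := by
      rcases mul_eq_zero.1 this with h | h
      · exact h
      · exact absurd h (Real.exp_ne_zero _)
    have : a t - b t = 0 := hu0
    linarith [this]
  have heq : ∀ t, W1 t = W2 t := by
    intro t
    ext i j
    by_cases h : i = j
    · subst h; exact key i t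
    · rw [hdiag1 t h, hdiag2 t h]
  refine ⟨heq, fun i t => ?_⟩
  have := ha i t
  rw [show W2 t i i = W1 t i i from by rw [heq t]] at this
  convert this using 1
  ring
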